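/- Fix θ in (0, π/2] and let a_n = (π−θ)^n − θ^n − (1 − 2θ/π)·π^n for natural numbers n. Then a_n ≤ 0 for all n ≥ 2. -/

import Mathlib

open Real

lemma key_aux (x : ℝ) (hx : 0 < x) (hx2 : x ≤ 1/2) :
    ∀ n, 2 ≤ n → (1 - x)^n ≤ x^n + 1 - 2*x := by
  intro n hn
  induction n, hn using Nat.le_induction with
  | base => nlinarith
  | succ n hn ih =>
    have h1x : (0:ℝ) ≤ 1 - x := by linarith
    have hxn : x^n ≤ x := by
      calc x^n ≤ x^1 := pow_le_pow_of_le_one hx.le (by linarith) (by omega)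
      _ = x := pow_one x
    have h2x : (0:ℝ) ≤ 1 - 2*x := by linarith
    have : (1-x)^(n+1) = (1-x) * (1-x)^n := by ring
    rw [this]
    have h3 : (1-x) * (1-x)^n ≤ (1-x) * (x^n + 1 - 2*x) :=
      mul_le_mul_of_nonneg_left ih h1x
    have h4 : x^n * (1 - 2*x) ≤ x * (1 - 2*x) :=
      mul_le_mul_of_nonneg_right hxn h2x
    have hpow : x^(n+1) = x * x^n := by ring
    rw [hpow]
    nlinarith [h3, h4]

theorem stmt_3 (θ : ℝ) (hθ : θ ∈ Set.Ioc 0 (π/2)) (n : ℕ) (hn : 2 ≤ n) :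
    (π - θ)^n - θ^n - (1 - 2*θ/π) * π^n ≤ 0 := by
  obtain ⟨h0, h2⟩ := hθ
  have hπ := pi_pos
  have hx : 0 < θ/π := div_pos h0 hπ
  have hx2 : θ/π ≤ 1/2 := by
    rw [div_le_iff₀ hπ]; linarith
  have key := key_aux (θ/π) hx hx2 n hn
  have h1 : 1 - θ/π = (π - θ)/π := by field_simp
  rw [h1, div_pow, div_pow] at key
  have hpn : (0:ℝ) < π^n := pow_pos hπ n
  have := mul_le_mul_of_nonneg_right key hpn.le
  have e1 : (π-θ)^n / π^n * π^n = (π-θ)^n := by field_simp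
  have e2 : (θ^n / π^n + 1 - 2*(θ/π)) * π^n = θ^n + π^n - 2*θ/π*π^n := by
    field_simp
  rw [e1, e2] at this
  have : (π - θ)^n ≤ θ^n + (1 - 2*θ/π) * π^n := by nlinarith [this]
  linarith
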